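/- The ratios b_k / b_{k−1} converge, and lim_{k→∞} b_k / b_{k−1} = max(a, b). -/

import Mathlib

set_option linter.unusedSectionVars false

open Finset Filter Real

noncomputable def hseq (m n : ℝ) (k : ℕ) : ℝ := ∑ i ∈ Finset.range (k+1), m ^ i * n ^ (k - i)

noncomputable def Aseq (m n Q : ℝ) : ℕ → ℝ
  | 0 => 1
  | 1 => m + n
  | k+2 => (m+n) * Aseq m n Q (k+1) - m*n * (1 - Q^(k+1)) * Aseq m n Q k

noncomputable def Wse (m n Q : ℝ) (k : ℕ) : ℝ :=
  Aseq m n Q (k+1) * hseq m n k - Aseq m n Q k * hseq m n (k+1)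

lemma hseq_zero (m n : ℝ) : hseq m n 0 = 1 := by simp [hseq]

lemma hseq_succ (m n : ℝ) (k : ℕ) :
    hseq m n (k+1) = m * hseq m n k + n ^ (k+1) := by
  unfold hseq
  rw [Finset.sum_range_succ' (fun i => m ^ i * n ^ (k+1-i)) (k+1)]
  simp only [Nat.succ_sub_succ, pow_zero, one_mul, Nat.sub_zero]
  rw [Finset.mul_sum]
  congr 1
  exact Finset.sum_congr rfl fun i _ => by rw [pow_succ]; ring

lemma hseq_one (m n : ℝ) : hseq m n 1 = m + n := by
  rw [hseq_succ, hseq_zero]; ring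

lemma hseq_rec (m n : ℝ) (k : ℕ) :
    hseq m n (k+2) = (m+n) * hseq m n (k+1) - m*n*hseq m n k := by
  have h1 := hseq_succ m n (k+1)
  have h2 := hseq_succ m n k
  have hn : n ^ (k+1+1) = n * n^(k+1) := by rw [pow_succ]; ring
  rw [h1, hn, show n^(k+1) = hseq m n (k+1) - m * hseq m n k by rw [h2]; ring]
  ring

lemma hseq_pos {m n : ℝ} (hm : 0 < m) (hn : 0 ≤ n) : ∀ k, 0 < hseq m n k := by
  intro k
  induction k with
  | zero => simp [hseq_zero]
  | succ k ih =>
      rw [hseq_succ]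
      have := pow_nonneg hn (k+1)
      nlinarith

lemma hseq_succ_ge {m n : ℝ} (hn : 0 ≤ n) (k : ℕ) :
    m * hseq m n k ≤ hseq m n (k+1) := by
  rw [hseq_succ]
  have := pow_nonneg hn (k+1)
  linarith

lemma hseq_pow_le {m n : ℝ} (hm : 0 < m) (hn : 0 ≤ n) {j k : ℕ} (hjk : j ≤ k) :
    m ^ (k-j) * hseq m n j ≤ hseq m n k := by
  induction k with
  | zero => interval_cases j; simp
  | succ k ih =>
      rcases Nat.lt_or_ge j (k+1) with h | h
      · have hj : j ≤ k := by omega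
        have : k + 1 - j = (k - j) + 1 := by omega
        rw [this, pow_succ]
        calc m ^ (k-j) * m * hseq m n j = m * (m ^ (k-j) * hseq m n j) := by ring
          _ ≤ m * hseq m n k := by
              have := ih hj
              nlinarith
          _ ≤ hseq m n (k+1) := hseq_succ_ge hn k
      · have : j = k+1 := by omega
        subst this; simp

lemma hseq_le {m n : ℝ} (hm : 0 < m) (hn : 0 ≤ n) (hnm : n ≤ m) (k : ℕ) :
    hseq m n k ≤ (k+1) * m^k := by
  have : ∀ i ∈ Finset.range (k+1), m ^ i * n ^ (k-i) ≤ m ^ k := by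
    intro i hi
    have hik : i ≤ k := by simpa [Nat.lt_succ_iff] using hi
    calc m ^ i * n ^ (k-i) ≤ m ^ i * m ^ (k-i) := by
          have := pow_le_pow_left₀ hn hnm (k-i)
          have := pow_pos hm i
          nlinarith
      _ = m ^ k := by rw [← pow_add]; congr 1; omega
  calc hseq m n k ≤ ∑ _i ∈ Finset.range (k+1), m ^ k := Finset.sum_le_sum this
    _ = (k+1) * m^k := by rw [Finset.sum_const, Finset.card_range, nsmul_eq_mul]; push_cast; ring

lemma hseq_ge_card {m n : ℝ} (hn : 0 ≤ n) (hnm : n ≤ m) (k : ℕ) :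
    (k+1) * n^k ≤ hseq m n k := by
  have : ∀ i ∈ Finset.range (k+1), n ^ k ≤ m ^ i * n ^ (k-i) := by
    intro i hi
    have hik : i ≤ k := by simpa [Nat.lt_succ_iff] using hi
    calc n ^ k = n ^ i * n ^ (k-i) := by rw [← pow_add]; congr 1; omega
      _ ≤ m ^ i * n ^ (k-i) := by
          have h1 := pow_le_pow_left₀ hn hnm i
          have h2 := pow_nonneg hn (k-i)
          nlinarith [pow_nonneg hn i]
  calc ((k:ℝ)+1) * n^k = ∑ _i ∈ Finset.range (k+1), n ^ k := by
        rw [Finset.sum_const, Finset.card_range, nsmul_eq_mul]; push_cast; ring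
    _ ≤ hseq m n k := Finset.sum_le_sum this

lemma hseq_diag {m : ℝ} (k : ℕ) : hseq m m k = (k+1) * m^k := by
  unfold hseq
  have : ∀ i ∈ Finset.range (k+1), m ^ i * m ^ (k - i) = m ^ k := by
    intro i hi
    have hik : i ≤ k := by simpa [Nat.lt_succ_iff] using hi
    rw [← pow_add]
    congr 1
    omega
  rw [Finset.sum_congr rfl this, Finset.sum_const, Finset.card_range, nsmul_eq_mul]
  push_cast; ring

section Amain

variable {m n Q : ℝ} (hm : 0 < m) (hn : 0 < n) (hnm : n ≤ m) (hQ0 : 0 < Q) (hQ1 : Q < 1)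

lemma Aseq_zero : Aseq m n Q 0 = 1 := rfl
lemma Aseq_one : Aseq m n Q 1 = m + n := rfl
lemma Aseq_rec (k : ℕ) :
    Aseq m n Q (k+2) = (m+n) * Aseq m n Q (k+1) - m*n * (1 - Q^(k+1)) * Aseq m n Q k := rfl

lemma Wse_zero : Wse m n Q 0 = 0 := by
  unfold Wse
  rw [Aseq_one, Aseq_zero, hseq_zero, hseq_one]
  ring

lemma Wse_succ (k : ℕ) :
    Wse m n Q (k+1) = m*n * Wse m n Q k + m*n * Q^(k+1) * Aseq m n Q k * hseq m n (k+1) := by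
  unfold Wse
  rw [Aseq_rec, hseq_rec]
  ring

include hm hn hQ0 in
lemma Aseq_pos_W : ∀ k, 0 < Aseq m n Q k ∧ 0 < Aseq m n Q (k+1) ∧ 0 ≤ Wse m n Q k := by
  intro k
  induction k with
  | zero =>
      refine ⟨by rw [Aseq_zero]; norm_num, by rw [Aseq_one]; linarith, by rw [Wse_zero]⟩
  | succ k ih =>
      obtain ⟨hA, hA1, hW⟩ := ih
      have hh1 := hseq_pos hm hn.le (k+1)
      have hh2 := hseq_pos hm hn.le (k+2)
      have hW1 : 0 ≤ Wse m n Q (k+1) := by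
        rw [Wse_succ]
        have h1 : 0 ≤ m*n * Wse m n Q k := by positivity
        have h2 : 0 ≤ m*n * Q^(k+1) * Aseq m n Q k * hseq m n (k+1) := by positivity
        linarith
      have hid : Aseq m n Q (k+2) * hseq m n (k+1)
          = Aseq m n Q (k+1) * hseq m n (k+2) + Wse m n Q (k+1) := by
        unfold Wse; ring
      have hpos : 0 < Aseq m n Q (k+2) * hseq m n (k+1) := by
        rw [hid]
        have := mul_pos hA1 hh2
        linarith
      have hA2 : 0 < Aseq m n Q (k+2) := by
        by_contra hcon
        push_neg at hcon
        nlinarith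
      exact ⟨hA1, hA2, hW1⟩

include hm hn hQ0 in
lemma Aseq_pos (k : ℕ) : 0 < Aseq m n Q k := (Aseq_pos_W hm hn hQ0 k).1

include hm hn hQ0 in
lemma Wse_nonneg (k : ℕ) : 0 ≤ Wse m n Q k := (Aseq_pos_W hm hn hQ0 k).2.2

include hm hn hQ0 in
lemma tseq_mono : Monotone (fun k => Aseq m n Q k / hseq m n k) := by
  apply monotone_nat_of_le_succ
  intro k
  have hh := hseq_pos hm hn.le k
  have hh1 := hseq_pos hm hn.le (k+1)
  rw [div_le_div_iff₀ hh hh1]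
  have := Wse_nonneg hm hn hQ0 k
  unfold Wse at this
  linarith

lemma Wse_eq_sum : ∀ k, Wse m n Q k
    = ∑ j ∈ Finset.range k, (m*n)^(k-1-j) * ((m*n) * Q^(j+1) * Aseq m n Q j * hseq m n (j+1)) := by
  intro k
  induction k with
  | zero => rw [Wse_zero]; simp
  | succ k ih =>
      rw [Wse_succ, ih, Finset.mul_sum, Finset.sum_range_succ]
      congr 1
      · apply Finset.sum_congr rfl
        intro j hj
        have hjk : j < k := Finset.mem_range.mp hj
        have he : k - j = (k - 1 - j) + 1 := by omega
        have he2 : k + 1 - 1 - j = k - j := by omega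
        rw [he2, he, pow_succ]
        ring
      · have : k + 1 - 1 - k = 0 := by omega
        rw [this, pow_zero, one_mul]

include hm hn hQ0 in
lemma Aseq_le_t_mul {j k : ℕ} (hjk : j ≤ k) :
    Aseq m n Q j ≤ (Aseq m n Q k / hseq m n k) * hseq m n j := by
  have hhj := hseq_pos hm hn.le j
  have ht := tseq_mono hm hn hQ0 hjk
  simp only at ht
  calc Aseq m n Q j = (Aseq m n Q j / hseq m n j) * hseq m n j := by
        field_simp
    _ ≤ (Aseq m n Q k / hseq m n k) * hseq m n j := by
        exact mul_le_mul_of_nonneg_right ht hhj.le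

noncomputable def Gse (m n Q : ℝ) (k : ℕ) : ℝ :=
  ∑ j ∈ Finset.range k, (m*n)^(k-1-j) * ((m*n) * Q^(j+1) * hseq m n j * hseq m n (j+1))

include hm hn hQ0 in
lemma Wse_le_G (k : ℕ) :
    Wse m n Q k ≤ (Aseq m n Q k / hseq m n k) * Gse m n Q k := by
  rw [Wse_eq_sum (m:=m) (n:=n) (Q:=Q) k, Gse, Finset.mul_sum]
  apply Finset.sum_le_sum
  intro j hj
  have hjk : j ≤ k := (Finset.mem_range.mp hj).le
  have hAj := Aseq_le_t_mul hm hn hQ0 hjk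
  have hc : (0:ℝ) ≤ (m*n)^(k-1-j) * ((m*n) * Q^(j+1) * hseq m n (j+1)) := by
    have h1 := hseq_pos hm hn.le (j+1)
    positivity
  calc (m*n)^(k-1-j) * ((m*n) * Q^(j+1) * Aseq m n Q j * hseq m n (j+1))
      = ((m*n)^(k-1-j) * ((m*n) * Q^(j+1) * hseq m n (j+1))) * Aseq m n Q j := by ring
    _ ≤ ((m*n)^(k-1-j) * ((m*n) * Q^(j+1) * hseq m n (j+1)))
        * ((Aseq m n Q k / hseq m n k) * hseq m n j) := mul_le_mul_of_nonneg_left hAj hc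
    _ = Aseq m n Q k / hseq m n k
        * ((m*n)^(k-1-j) * (m*n * Q^(j+1) * hseq m n j * hseq m n (j+1))) := by ring

include hm hn hQ0 in
lemma Gse_nonneg (k : ℕ) : 0 ≤ Gse m n Q k := by
  apply Finset.sum_nonneg
  intro j hj
  have h1 := hseq_pos hm hn.le j
  have h2 := hseq_pos hm hn.le (j+1)
  positivity

include hm hn hQ0 in
lemma tseq_succ_le (k : ℕ) :
    Aseq m n Q (k+1) / hseq m n (k+1)
      ≤ (Aseq m n Q k / hseq m n k) * (1 + Gse m n Q k / (hseq m n k * hseq m n (k+1))) := by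
  have hh := hseq_pos hm hn.le k
  have hh1 := hseq_pos hm hn.le (k+1)
  have hA := Aseq_pos hm hn hQ0 k
  have hWG := Wse_le_G hm hn hQ0 k
  have hid : Aseq m n Q (k+1) * hseq m n k = Aseq m n Q k * hseq m n (k+1) + Wse m n Q k := by
    unfold Wse; ring
  rw [div_le_iff₀ hh1, mul_comm]
  have expand : hseq m n (k+1) * ((Aseq m n Q k / hseq m n k) * (1 + Gse m n Q k / (hseq m n k * hseq m n (k+1))))
      = (Aseq m n Q k * hseq m n (k+1) + (Aseq m n Q k / hseq m n k) * Gse m n Q k) / hseq m n k := by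
    field_simp
  rw [expand, le_div_iff₀ hh, hid]
  nlinarith [hWG]

-- case n < m : geometric bound on delta
include hm hn hQ0 in
lemma delta_le_lt (k : ℕ) :
    Gse m n Q k / (hseq m n k * hseq m n (k+1)) ≤ k * (max Q (n/m))^(k+1) := by
  set M := max Q (n/m) with hM
  have hM0 : 0 < M := lt_max_of_lt_left hQ0
  have hh := hseq_pos hm hn.le k
  have hh1 := hseq_pos hm hn.le (k+1)
  have hD : 0 < hseq m n k * hseq m n (k+1) := mul_pos hh hh1
  rw [div_le_iff₀ hD]
  have key : ∀ j ∈ Finset.range k,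
      (m*n)^(k-1-j) * ((m*n) * Q^(j+1) * hseq m n j * hseq m n (j+1))
        ≤ M^(k+1) * (hseq m n k * hseq m n (k+1)) := by
    intro j hj
    have hjk : j < k := Finset.mem_range.mp hj
    have e1 : (m*n)^(k-1-j) * (m*n) = (m*n)^(k-j) := by
      rw [← pow_succ]
      congr 1
      omega
    have hmn : (m*n)^(k-j) = (n/m)^(k-j) * (m^(k-j) * m^(k-j)) := by
      rw [← mul_pow, ← mul_pow]
      congr 1
      field_simp
    have hb1 : m^(k-j) * hseq m n j ≤ hseq m n k := hseq_pow_le hm hn.le hjk.le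
    have hb2 : m^(k-j) * hseq m n (j+1) ≤ hseq m n (k+1) := by
      have := hseq_pow_le hm hn.le (show j+1 ≤ k+1 by omega) (m:=m) (n:=n)
      simpa [show k+1-(j+1) = k-j by omega] using this
    have hhj := hseq_pos hm hn.le j
    have hhj1 := hseq_pos hm hn.le (j+1)
    have hmp := pow_pos hm (k-j)
    have step1 : (m*n)^(k-1-j) * ((m*n) * Q^(j+1) * hseq m n j * hseq m n (j+1))
        = (n/m)^(k-j) * Q^(j+1) * ((m^(k-j) * hseq m n j) * (m^(k-j) * hseq m n (j+1))) := by
      calc (m*n)^(k-1-j) * ((m*n) * Q^(j+1) * hseq m n j * hseq m n (j+1))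
          = ((m*n)^(k-1-j) * (m*n)) * (Q^(j+1) * hseq m n j * hseq m n (j+1)) := by ring
        _ = (m*n)^(k-j) * (Q^(j+1) * hseq m n j * hseq m n (j+1)) := by rw [e1]
        _ = _ := by rw [hmn]; ring
    rw [step1]
    have hQp := pow_pos hQ0 (j+1)
    have hθ0 : (0:ℝ) < n/m := div_pos hn hm
    have hθp := pow_pos hθ0 (k-j)
    have hprod : (m^(k-j) * hseq m n j) * (m^(k-j) * hseq m n (j+1))
        ≤ hseq m n k * hseq m n (k+1) := by
      have p1 : 0 < m^(k-j) * hseq m n j := mul_pos hmp hhj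
      have p2 : 0 < m^(k-j) * hseq m n (j+1) := mul_pos hmp hhj1
      nlinarith
    have hMb : (n/m)^(k-j) * Q^(j+1) ≤ M^(k+1) := by
      have h1 : (n/m)^(k-j) ≤ M^(k-j) := pow_le_pow_left₀ hθ0.le (le_max_right _ _) _
      have h2 : Q^(j+1) ≤ M^(j+1) := pow_le_pow_left₀ hQ0.le (le_max_left _ _) _
      have := mul_le_mul h1 h2 hQp.le (pow_nonneg hM0.le _)
      calc (n/m)^(k-j) * Q^(j+1) ≤ M^(k-j) * M^(j+1) := this
        _ = M^(k+1) := by rw [← pow_add]; congr 1; omega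
    calc (n/m)^(k-j) * Q^(j+1) * ((m^(k-j) * hseq m n j) * (m^(k-j) * hseq m n (j+1)))
        ≤ (n/m)^(k-j) * Q^(j+1) * (hseq m n k * hseq m n (k+1)) := by
          apply mul_le_mul_of_nonneg_left hprod
          positivity
      _ ≤ M^(k+1) * (hseq m n k * hseq m n (k+1)) := by
          apply mul_le_mul_of_nonneg_right hMb hD.le
  calc Gse m n Q k ≤ ∑ _j ∈ Finset.range k, M^(k+1) * (hseq m n k * hseq m n (k+1)) :=
        Finset.sum_le_sum key
    _ = k * (M^(k+1) * (hseq m n k * hseq m n (k+1))) := by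
        rw [Finset.sum_const, Finset.card_range, nsmul_eq_mul]
    _ = k * M^(k+1) * (hseq m n k * hseq m n (k+1)) := by ring

lemma summable_poly_geom (hQ0 : 0 < Q) (hQ1 : Q < 1) :
    Summable (fun j : ℕ => Q^(j+1) * ((j:ℝ)+1) * ((j:ℝ)+2)) := by
  have hnorm : ‖Q‖ < 1 := by rw [Real.norm_eq_abs, abs_of_pos hQ0]; exact hQ1
  have h2 : Summable (fun j : ℕ => ((j:ℝ)^2) * Q^j) :=
    summable_pow_mul_geometric_of_norm_lt_one 2 hnorm
  have h1 : Summable (fun j : ℕ => ((j:ℝ)^1) * Q^j) :=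
    summable_pow_mul_geometric_of_norm_lt_one 1 hnorm
  have h0 : Summable (fun j : ℕ => Q^j) := summable_geometric_of_lt_one hQ0.le hQ1
  have hsum := (h2.mul_left Q).add ((h1.mul_left (3*Q)).add (h0.mul_left (2*Q)))
  apply hsum.congr
  intro j
  simp only [pow_one]
  ring

-- case n = m : 1/k^2-type bound on delta
include hm hQ0 hQ1 in
lemma delta_le_eq (k : ℕ) :
    Gse m m Q k / (hseq m m k * hseq m m (k+1))
      ≤ (∑' j : ℕ, Q^(j+1) * ((j:ℝ)+1) * ((j:ℝ)+2)) * (((k:ℝ)+1) * ((k:ℝ)+2))⁻¹ := by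
  have hGse : Gse m m Q k
      = (∑ j ∈ Finset.range k, Q^(j+1) * ((j:ℝ)+1) * ((j:ℝ)+2)) * m^(2*k+1) := by
    rw [Gse, Finset.sum_mul]
    apply Finset.sum_congr rfl
    intro j hj
    have hjk : j < k := Finset.mem_range.mp hj
    have hmpow : (m*m)^(k-1-j) * ((m*m) * (m^j * m^(j+1))) = m^(2*k+1) := by
      rw [show m*m = m^2 from (sq m).symm]
      rw [← pow_mul, ← pow_add, ← pow_add, ← pow_add]
      congr 1
      omega
    calc (m*m)^(k-1-j) * ((m*m) * Q^(j+1) * hseq m m j * hseq m m (j+1))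
        = ((m*m)^(k-1-j) * ((m*m) * (m^j * m^(j+1)))) * (Q^(j+1)*((j:ℝ)+1)*((j:ℝ)+2)) := by
          rw [hseq_diag, hseq_diag]; push_cast; ring
      _ = Q^(j+1) * ((j:ℝ)+1) * ((j:ℝ)+2) * m^(2*k+1) := by rw [hmpow]; ring
  have hden : hseq m m k * hseq m m (k+1) = (((k:ℝ)+1) * ((k:ℝ)+2)) * m^(2*k+1) := by
    rw [hseq_diag, hseq_diag]
    push_cast
    rw [show 2*k+1 = k + (k+1) by omega, pow_add]
    ring
  have hmp : (0:ℝ) < m^(2*k+1) := pow_pos hm _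
  have hkk : (0:ℝ) < ((k:ℝ)+1) * ((k:ℝ)+2) := by positivity
  rw [hGse, hden, mul_comm (((k:ℝ)+1) * ((k:ℝ)+2)) (m^(2*k+1)), ← div_div,
    mul_div_assoc, div_self hmp.ne', mul_one, div_eq_mul_inv]
  apply mul_le_mul_of_nonneg_right _ (by positivity)
  apply Summable.sum_le_tsum _ _ (summable_poly_geom hQ0 hQ1)
  intro j _
  positivity

include hm hn hnm hQ0 hQ1 in
lemma exists_partial_bound : ∃ S : ℝ, ∀ K : ℕ,
    ∑ k ∈ Finset.range K, Gse m n Q k / (hseq m n k * hseq m n (k+1)) ≤ S := by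
  rcases eq_or_lt_of_le hnm with heq | hlt
  · -- n = m
    subst heq
    set CQ := ∑' j : ℕ, Q^(j+1) * ((j:ℝ)+1) * ((j:ℝ)+2) with hCQ
    have hCQ0 : 0 ≤ CQ := tsum_nonneg (fun j => by positivity)
    have htel : ∀ K : ℕ, ∑ k ∈ Finset.range K, (((k:ℝ)+1)*((k:ℝ)+2))⁻¹ ≤ 1 := by
      intro K
      have key : ∑ k ∈ Finset.range K, (((k:ℝ)+1)*((k:ℝ)+2))⁻¹ = 1 - ((K:ℝ)+1)⁻¹ := by
        induction K with
        | zero => simp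
        | succ K ih =>
            rw [Finset.sum_range_succ, ih]
            have h1 : ((K:ℝ)+1) ≠ 0 := by positivity
            have h2 : ((K:ℝ)+2) ≠ 0 := by positivity
            push_cast
            field_simp
            ring
      rw [key]
      have : (0:ℝ) < ((K:ℝ)+1)⁻¹ := by positivity
      linarith
    refine ⟨CQ, fun K => ?_⟩
    calc ∑ k ∈ Finset.range K, Gse n n Q k / (hseq n n k * hseq n n (k+1))
        ≤ ∑ k ∈ Finset.range K, CQ * (((k:ℝ)+1)*((k:ℝ)+2))⁻¹ :=
          Finset.sum_le_sum (fun k _ => delta_le_eq hn hQ0 hQ1 k)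
      _ = CQ * ∑ k ∈ Finset.range K, (((k:ℝ)+1)*((k:ℝ)+2))⁻¹ := by rw [Finset.mul_sum]
      _ ≤ CQ * 1 := mul_le_mul_of_nonneg_left (htel K) hCQ0
      _ = CQ := mul_one CQ
  · -- n < m
    set M := max Q (n/m) with hM
    have hM0 : 0 < M := lt_max_of_lt_left hQ0
    have hM1 : M < 1 := by
      apply max_lt hQ1
      rw [div_lt_one hm]
      exact hlt
    have hnorm : ‖M‖ < 1 := by rw [Real.norm_eq_abs, abs_of_pos hM0]; exact hM1
    have hs1 : Summable (fun k : ℕ => ((k:ℝ)^1) * M^k) :=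
      summable_pow_mul_geometric_of_norm_lt_one 1 hnorm
    have hsummable : Summable (fun k : ℕ => (k:ℝ) * M^(k+1)) := by
      apply (hs1.mul_right M).congr
      intro k
      rw [pow_one, pow_succ]
      ring
    refine ⟨∑' k : ℕ, (k:ℝ) * M^(k+1), fun K => ?_⟩
    calc ∑ k ∈ Finset.range K, Gse m n Q k / (hseq m n k * hseq m n (k+1))
        ≤ ∑ k ∈ Finset.range K, (k:ℝ) * M^(k+1) :=
          Finset.sum_le_sum (fun k _ => delta_le_lt hm hn hQ0 k)
      _ ≤ ∑' k : ℕ, (k:ℝ) * M^(k+1) :=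
          Summable.sum_le_tsum _ (fun k _ => by positivity) hsummable

include hm hn hnm hQ0 hQ1 in
lemma tseq_bddAbove : ∃ Cb : ℝ, ∀ K : ℕ, Aseq m n Q K / hseq m n K ≤ Cb := by
  obtain ⟨S, hS⟩ := exists_partial_bound hm hn hnm hQ0 hQ1
  refine ⟨Real.exp S, fun K => ?_⟩
  have hdnn : ∀ k, 0 ≤ Gse m n Q k / (hseq m n k * hseq m n (k+1)) := by
    intro k
    have h1 := hseq_pos hm hn.le k
    have h2 := hseq_pos hm hn.le (k+1)
    exact div_nonneg (Gse_nonneg hm hn hQ0 k) (by positivity)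
  have key : ∀ K : ℕ, Aseq m n Q K / hseq m n K
      ≤ Real.exp (∑ k ∈ Finset.range K, Gse m n Q k / (hseq m n k * hseq m n (k+1))) := by
    intro K
    induction K with
    | zero => simp [Aseq_zero, hseq_zero]
    | succ K ih =>
        have hstep := tseq_succ_le hm hn hQ0 K
        have hδ := hdnn K
        calc Aseq m n Q (K+1) / hseq m n (K+1)
            ≤ (Aseq m n Q K / hseq m n K) * (1 + Gse m n Q K / (hseq m n K * hseq m n (K+1))) :=
              hstep
          _ ≤ Real.exp (∑ k ∈ Finset.range K, Gse m n Q k / (hseq m n k * hseq m n (k+1)))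
              * (1 + Gse m n Q K / (hseq m n K * hseq m n (K+1))) := by
              apply mul_le_mul_of_nonneg_right ih
              linarith
          _ ≤ Real.exp (∑ k ∈ Finset.range K, Gse m n Q k / (hseq m n k * hseq m n (k+1)))
              * Real.exp (Gse m n Q K / (hseq m n K * hseq m n (K+1))) := by
              apply mul_le_mul_of_nonneg_left _ (Real.exp_nonneg _)
              have := Real.add_one_le_exp (Gse m n Q K / (hseq m n K * hseq m n (K+1)))
              linarith
          _ = Real.exp (∑ k ∈ Finset.range (K+1), Gse m n Q k / (hseq m n k * hseq m n (k+1))) := by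
              rw [← Real.exp_add, Finset.sum_range_succ]
  calc Aseq m n Q K / hseq m n K ≤ _ := key K
    _ ≤ Real.exp S := Real.exp_le_exp.mpr (hS K)

include hm hn hnm hQ0 hQ1 in
lemma hseq_ratio_tendsto :
    Filter.Tendsto (fun k : ℕ => hseq m n (k+1) / hseq m n k) Filter.atTop (nhds m) := by
  have key : ∀ k : ℕ, hseq m n (k+1) / hseq m n k = m + n^(k+1) / hseq m n k := by
    intro k
    have hh := hseq_pos hm hn.le k
    rw [hseq_succ, add_div, mul_div_assoc, div_self hh.ne', mul_one]
  have h0 : ∀ k : ℕ, 0 ≤ n^(k+1) / hseq m n k := by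
    intro k
    have hh := hseq_pos hm hn.le k
    positivity
  have hub : ∀ k : ℕ, n^(k+1) / hseq m n k ≤ n / ((k:ℝ)+1) := by
    intro k
    have hh := hseq_pos hm hn.le k
    have hcard := hseq_ge_card hn.le hnm k
    rw [div_le_div_iff₀ hh (by positivity)]
    have hp : (0:ℝ) ≤ n^k := pow_nonneg hn.le k
    have : n^(k+1) = n * n^k := by rw [pow_succ]; ring
    nlinarith
  have hlim : Filter.Tendsto (fun k : ℕ => n / ((k:ℝ)+1)) Filter.atTop (nhds 0) := by
    have := (tendsto_const_div_atTop_nhds_zero_nat n).comp (tendsto_add_atTop_nat 1)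
    apply this.congr
    intro k
    simp only [Function.comp_apply]
    push_cast
    ring_nf
  have hsq : Filter.Tendsto (fun k : ℕ => n^(k+1) / hseq m n k) Filter.atTop (nhds 0) :=
    squeeze_zero h0 hub hlim
  have := hsq.const_add m
  rw [add_zero] at this
  apply this.congr
  intro k
  rw [key k]

include hm hn hnm hQ0 hQ1 in
lemma Aseq_ratio_tendsto :
    Filter.Tendsto (fun k : ℕ => Aseq m n Q (k+1) / Aseq m n Q k) Filter.atTop (nhds m) := by
  classical
  set t : ℕ → ℝ := fun k => Aseq m n Q k / hseq m n k with ht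
  have hmono : Monotone t := tseq_mono hm hn hQ0
  obtain ⟨Cb, hCb⟩ := tseq_bddAbove hm hn hnm hQ0 hQ1
  have hbdd : BddAbove (Set.range t) := by
    refine ⟨Cb, ?_⟩
    rintro x ⟨K, rfl⟩
    exact hCb K
  have hT := tendsto_atTop_ciSup hmono hbdd
  set T := ⨆ k, t k with hTdef
  have ht0 : t 0 = 1 := by simp [ht, Aseq_zero, hseq_zero]
  have hT1 : 1 ≤ T := by
    rw [← ht0]
    exact le_ciSup hbdd 0
  have hTne : T ≠ 0 := by linarith
  have hTsucc : Filter.Tendsto (fun k => t (k+1)) Filter.atTop (nhds T) :=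
    hT.comp (tendsto_add_atTop_nat 1)
  have hts : Filter.Tendsto (fun k => t (k+1) / t k) Filter.atTop (nhds 1) := by
    have := hTsucc.div hT hTne
    rwa [div_self hTne] at this
  have hhr := hseq_ratio_tendsto hm hn hnm hQ0 hQ1 (Q := Q)
  have hmul := hhr.mul hts
  rw [mul_one] at hmul
  apply hmul.congr
  intro k
  have hhk := (hseq_pos hm hn.le k).ne'
  have hhk1 := (hseq_pos hm hn.le (k+1)).ne'
  have hAk := (Aseq_pos hm hn hQ0 k).ne'
  simp only [ht]
  field_simp

end Amain


/-- Fix `q ∈ (0,1)` and reals `a, b > 0`. Set `κ = a + b`, `μ = a·b`, and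
`c k = (1 − q^(2k))^(−1/2)` for `k ≥ 1`. Define `(B k)` by `B 0 = 1`,
`B 1 = κ c 1`, and `B (k+1) = κ c (k+1) B k − μ (c (k+1) / c k) B (k−1)` for `k ≥ 1`.
Then the ratios `B k / B (k-1)` converge to `max a b`. -/
theorem ratio_limit_of_recurrence_sequence
    (q a b : ℝ) (hq0 : 0 < q) (hq1 : q < 1) (ha : 0 < a) (hb : 0 < b)
    (c : ℕ → ℝ) (hc : ∀ k : ℕ, 1 ≤ k → c k = (Real.sqrt (1 - q ^ (2 * k)))⁻¹)
    (B : ℕ → ℝ) (hB0 : B 0 = 1) (hB1 : B 1 = (a + b) * c 1)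
    (hBrec : ∀ k : ℕ, 1 ≤ k →
      B (k + 1) = (a + b) * c (k + 1) * B k - (a * b) * (c (k + 1) / c k) * B (k - 1)) :
    Filter.Tendsto (fun k : ℕ => B (k + 1) / B k) Filter.atTop (nhds (max a b)) := by
  set m := max a b with hmdef
  set n := min a b with hndef
  set Q := q^2 with hQdef
  have hm : 0 < m := lt_of_lt_of_le ha (le_max_left a b)
  have hn : 0 < n := lt_min ha hb
  have hnm : n ≤ m := min_le_max
  have hQ0 : 0 < Q := pow_pos hq0 2
  have hQ1 : Q < 1 := pow_lt_one₀ hq0.le hq1 two_ne_zero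
  have hmn : m + n = a + b := by rw [hmdef, hndef, add_comm, min_add_max]
  have hmu : m * n = a * b := by rw [hmdef, hndef, mul_comm, min_mul_max]
  have hx : ∀ k : ℕ, 0 < 1 - q^(2*(k+1)) := by
    intro k
    have : q^(2*(k+1)) < 1 := pow_lt_one₀ hq0.le hq1 (by omega)
    linarith
  have hcpos : ∀ k : ℕ, 0 < c (k+1) := by
    intro k
    rw [hc (k+1) (by omega)]
    exact inv_pos.mpr (Real.sqrt_pos.mpr (hx k))
  have hckey : ∀ k : ℕ, c (k+1) * c (k+1) * (1 - Q^(k+1)) = 1 := by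
    intro k
    rw [hc (k+1) (by omega), ← Real.sqrt_inv, Real.mul_self_sqrt (inv_nonneg.mpr (hx k).le)]
    have hQq : (1:ℝ) - Q^(k+1) = 1 - q^(2*(k+1)) := by rw [hQdef, ← pow_mul]
    rw [hQq]
    exact inv_mul_cancel₀ (hx k).ne'
  set P : ℕ → ℝ := fun k => ∏ i ∈ Finset.range k, c (i+1) with hPdef
  have hP0 : P 0 = 1 := by simp [hPdef]
  have hPsucc : ∀ k, P (k+1) = P k * c (k+1) := by
    intro k
    simp [hPdef, Finset.prod_range_succ]
  have hPpos : ∀ k, 0 < P k := by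
    intro k
    apply Finset.prod_pos
    intro i _
    exact hcpos i
  have hBA : ∀ k, B k = P k * Aseq m n Q k := by
    have key : ∀ k, B k = P k * Aseq m n Q k ∧ B (k+1) = P (k+1) * Aseq m n Q (k+1) := by
      intro k
      induction k with
      | zero =>
          constructor
          · rw [hB0, hP0, Aseq_zero, mul_one]
          · rw [hB1, hPsucc 0, hP0, Aseq_one, ← hmn]
            ring
      | succ k ih =>
          obtain ⟨ih1, ih2⟩ := ih
          refine ⟨ih2, ?_⟩
          have hrec := hBrec (k+1) (by omega)
          simp only [Nat.add_sub_cancel] at hrec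
          have hdiv : c (k+2) / c (k+1) = c (k+2) * (c (k+1) * (1 - Q^(k+1))) := by
            rw [div_eq_iff (hcpos k).ne']
            linear_combination (-(c (k+2))) * hckey k
          rw [show k+1+1 = k+2 from rfl] at hrec
          rw [hrec, ih1, ih2, hdiv, Aseq_rec, hPsucc (k+1), hPsucc k, ← hmn, ← hmu]
          ring
    intro k
    exact (key k).1
  have hratio : ∀ k : ℕ, B (k+1) / B k = c (k+1) * (Aseq m n Q (k+1) / Aseq m n Q k) := by
    intro k
    rw [hBA (k+1), hBA k, hPsucc k]
    have h1 := (hPpos k).ne'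
    have h2 := (Aseq_pos hm hn hQ0 k).ne'
    field_simp
  have hcl : Filter.Tendsto (fun k : ℕ => c (k+1)) Filter.atTop (nhds 1) := by
    have hpow : Filter.Tendsto (fun k : ℕ => q^(2*(k+1))) Filter.atTop (nhds 0) := by
      have h1 : Filter.Tendsto (fun k : ℕ => Q^k) Filter.atTop (nhds 0) :=
        tendsto_pow_atTop_nhds_zero_of_lt_one hQ0.le hQ1
      have h2 := h1.comp (tendsto_add_atTop_nat 1)
      apply h2.congr
      intro k
      simp only [Function.comp_apply]
      rw [hQdef, ← pow_mul]
    have hcont : Filter.Tendsto (fun y : ℝ => (Real.sqrt (1 - y))⁻¹) (nhds 0) (nhds 1) := by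
      have h1 : ContinuousAt (fun y : ℝ => (Real.sqrt (1 - y))⁻¹) 0 := by
        apply ContinuousAt.inv₀
        · exact (Real.continuous_sqrt.comp (continuous_const.sub continuous_id)).continuousAt
        · simp
      have h2 : (fun y : ℝ => (Real.sqrt (1 - y))⁻¹) 0 = 1 := by simp
      simpa [h2] using h1.tendsto
    have h3 := hcont.comp hpow
    apply h3.congr
    intro k
    simp only [Function.comp_apply]
    rw [hc (k+1) (by omega)]
  have hAr := Aseq_ratio_tendsto hm hn hnm hQ0 hQ1
  have final := hcl.mul hAr
  rw [one_mul] at final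
  apply final.congr
  intro k
  rw [hratio k]
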